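/- Let M be a 2-generated axial algebra of Majorana type (ξ,η) admitting a flip, over a field of characteristic not 2. Suppose the axial dimension D = 4 and M satisfies an even relation a_2 + a_{−2} + α(a_1 + a_{−1}) + β a_0 = 0 with α, β ∈ F. Then multiplying by a_0 yields 2p_{2,0} + 2α p_1 + (η(2α − β + 2) + β)a_0 = 0; consequently η(2α − β + 2) + β = 0 and p_{2,0} = −α p_1, where p_1 = a_0a_1 − η(a_0+a_1) and p_{2,0} = a_0a_2 − η(a_0+a_2). -/

import Mathlib

/-- The `α`-eigenspace of the left-multiplication operator of `a`. -/
noncomputable def esp {F M : Type*} [Field F] [NonUnitalNonAssocCommRing M]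
    [Module F M] [SMulCommClass F M M] [IsScalarTower F M M] (a : M) (α : F) :
    Submodule F M :=
  Module.End.eigenspace (LinearMap.mul F M a) α

/-- An axis of Majorana type `(ξ,η)`: a primitive idempotent with semisimple
adjoint action, eigenvalues among `{1,0,ξ,η}`, obeying the fusion rule `F(ξ,η)`. -/
structure IsMajoranaAxis {F M : Type*} [Field F] [NonUnitalNonAssocCommRing M]
    [Module F M] [SMulCommClass F M M] [IsScalarTower F M M] (ξ η : F) (a : M) :
    Prop where
  idem : a * a = a
  prim : esp a (1 : F) = Submodule.span F {a}
  decomp : esp a (1 : F) ⊔ esp a (0 : F) ⊔ esp a ξ ⊔ esp a η = ⊤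
  fus00 : ∀ x ∈ esp a (0 : F), ∀ y ∈ esp a (0 : F), x * y ∈ esp a (0 : F)
  fus10 : ∀ x ∈ esp a (1 : F), ∀ y ∈ esp a (0 : F), x * y ∈ esp a (0 : F)
  fus0ξ : ∀ x ∈ esp a (0 : F), ∀ y ∈ esp a ξ, x * y ∈ esp a ξ
  fus0η : ∀ x ∈ esp a (0 : F), ∀ y ∈ esp a η, x * y ∈ esp a η
  fus1ξ : ∀ x ∈ esp a (1 : F), ∀ y ∈ esp a ξ, x * y ∈ esp a ξ
  fus1η : ∀ x ∈ esp a (1 : F), ∀ y ∈ esp a η, x * y ∈ esp a η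
  fusξξ : ∀ x ∈ esp a ξ, ∀ y ∈ esp a ξ, x * y ∈ esp a (0 : F) ⊔ esp a (1 : F)
  fusξη : ∀ x ∈ esp a ξ, ∀ y ∈ esp a η, x * y ∈ esp a η
  fusηη : ∀ x ∈ esp a η, ∀ y ∈ esp a η,
    x * y ∈ esp a (0 : F) ⊔ esp a (1 : F) ⊔ esp a ξ

/-- axial dimension 4 with an even relation
`a₂ + a₋₂ + α(a₁ + a₋₁) + β a₀ = 0`: multiplying by `a₀` gives
`2p₂,₀ + 2α p₁ + (η(2α-β+2)+β) a₀ = 0`, whence `η(2α-β+2)+β = 0` and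
`p₂,₀ = -α p₁`. -/
theorem stmt13 {F M : Type*} [Field F] [NonUnitalNonAssocCommRing M]
    [Module F M] [SMulCommClass F M M] [IsScalarTower F M M]
    (hchar : (2 : F) ≠ 0) (ξ η : F)
    (hξ0 : ξ ≠ 0) (hξ1 : ξ ≠ 1) (hη0 : η ≠ 0) (hη1 : η ≠ 1) (hξη : ξ ≠ η)
    (a : ℤ → M) (haxes : ∀ i : ℤ, IsMajoranaAxis ξ η (a i))
    (hgen : NonUnitalAlgebra.adjoin F ({a 0, a 1} : Set M) = ⊤)
    (θ τ₀ : M ≃ₗ[F] M)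
    (hθm : ∀ x y : M, θ (x * y) = θ x * θ y)
    (hτm : ∀ x y : M, τ₀ (x * y) = τ₀ x * τ₀ y)
    (hθa : ∀ i : ℤ, θ (a i) = a (1 - i))
    (hτa : ∀ i : ℤ, τ₀ (a i) = a (-i))
    (hτeven : ∀ x ∈ esp (a 0) (1 : F) ⊔ esp (a 0) (0 : F) ⊔ esp (a 0) ξ, τ₀ x = x)
    (hτodd : ∀ x ∈ esp (a 0) η, τ₀ x = -x)
    (hD : Module.rank F ↥(Submodule.span F (Set.range a)) = 4)
    (α β : F) (hrel : a 2 + a (-2) + α • (a 1 + a (-1)) + β • a 0 = 0) :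
    (2 : F) • (a 0 * a 2 - η • (a 0 + a 2)) +
        (2 * α) • (a 0 * a 1 - η • (a 0 + a 1)) +
        (η * (2 * α - β + 2) + β) • a 0 = 0 ∧
    η * (2 * α - β + 2) + β = 0 ∧
    a 0 * a 2 - η • (a 0 + a 2) = (-α) • (a 0 * a 1 - η • (a 0 + a 1)) := by
  -- even/odd decomposition w.r.t. τ₀
  have hdec : ∀ i : ℤ, ∃ x w : M, a i = x + w ∧ a (-i) = x - w ∧ a 0 * w = η • w := by
    intro i
    have h1 : a i ∈ (⊤ : Submodule F M) := Submodule.mem_top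
    rw [← (haxes 0).decomp, Submodule.mem_sup] at h1
    obtain ⟨x, hx, w, hw, hxw⟩ := h1
    refine ⟨x, w, hxw.symm, ?_, ?_⟩
    · have h2 := hτa i
      rw [← hxw, map_add, hτeven x hx, hτodd w hw] at h2
      rw [← h2]; abel
    · have := Module.End.mem_eigenspace_iff.mp hw
      rwa [LinearMap.mul_apply'] at this
  obtain ⟨x1, w1, hx1, hmx1, hw1⟩ := hdec 1
  obtain ⟨x2, w2, hx2, hmx2, hw2⟩ := hdec 2
  -- multiply the relation by a 0
  have E : a 0 * a 2 + a 0 * a (-2) + α • (a 0 * a 1 + a 0 * a (-1)) + β • a 0 = 0 := by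
    have h := congrArg (fun z => a 0 * z) hrel
    simpa [mul_add, mul_smul_comm, (haxes 0).idem] using h
  have K2 : a 0 * a (-2) = a 0 * a 2 - η • (a 2 - a (-2)) := by
    rw [hx2, hmx2, mul_add, mul_sub, hw2]; module
  have K1 : a 0 * a (-1) = a 0 * a 1 - η • (a 1 - a (-1)) := by
    rw [hx1, hmx1, mul_add, mul_sub, hw1]; module
  rw [K1, K2] at E
  -- E : a0*a2 + (a0*a2 - η•(a2 - a(-2))) + α•(a0*a1 + (a0*a1 - η•(a1-a(-1)))) + β•a0 = 0
  have conc1 : (2 : F) • (a 0 * a 2 - η • (a 0 + a 2)) +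
      (2 * α) • (a 0 * a 1 - η • (a 0 + a 1)) +
      (η * (2 * α - β + 2) + β) • a 0 = 0 := by
    have hcomb : (2 : F) • (a 0 * a 2 - η • (a 0 + a 2)) +
        (2 * α) • (a 0 * a 1 - η • (a 0 + a 1)) +
        (η * (2 * α - β + 2) + β) • a 0 =
        (a 0 * a 2 + (a 0 * a 2 - η • (a 2 - a (-2))) +
          α • (a 0 * a 1 + (a 0 * a 1 - η • (a 1 - a (-1)))) + β • a 0) -
        η • (a 2 + a (-2) + α • (a 1 + a (-1)) + β • a 0) := by module
    rw [hcomb, E, hrel, smul_zero, sub_zero]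
  refine ⟨conc1, ?_⟩
  -- invariance of p₁ under τ₀
  have pinv1 : a 0 * a (-1) - η • (a 0 + a (-1)) = a 0 * a 1 - η • (a 0 + a 1) := by
    rw [hx1, hmx1, mul_add, mul_sub, hw1]; module
  -- apply θ to conc1
  have eθ2 : θ (a 0 * a 2 - η • (a 0 + a 2)) = a 1 * a (-1) - η • (a 1 + a (-1)) := by
    rw [map_sub, map_smul, map_add, hθm, hθa 0, hθa 2,
      show (1:ℤ) - 0 = 1 by norm_num, show (1:ℤ) - 2 = -1 by norm_num]
  have eθ1 : θ (a 0 * a 1 - η • (a 0 + a 1)) = a 0 * a 1 - η • (a 0 + a 1) := by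
    rw [map_sub, map_smul, map_add, hθm, hθa 0, hθa 1,
      show (1:ℤ) - 0 = 1 by norm_num, show (1:ℤ) - 1 = 0 by norm_num,
      mul_comm (a 1) (a 0), add_comm (a 1) (a 0)]
  have H' : (2 : F) • (a 1 * a (-1) - η • (a 1 + a (-1))) +
      (2 * α) • (a 0 * a 1 - η • (a 0 + a 1)) +
      (η * (2 * α - β + 2) + β) • a 1 = 0 := by
    have h := congrArg θ conc1
    simp only [map_add, map_smul, map_zero] at h
    rw [eθ2, eθ1, hθa 0, show (1:ℤ) - 0 = 1 by norm_num] at h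
    exact h
  -- apply τ₀ to H'
  have eτq : τ₀ (a 1 * a (-1) - η • (a 1 + a (-1))) = a 1 * a (-1) - η • (a 1 + a (-1)) := by
    rw [map_sub, map_smul, map_add, hτm, hτa 1, hτa (-1),
      show -(-1:ℤ) = 1 by norm_num, mul_comm (a (-1)) (a 1), add_comm (a (-1)) (a 1)]
  have eτp1 : τ₀ (a 0 * a 1 - η • (a 0 + a 1)) = a 0 * a 1 - η • (a 0 + a 1) := by
    rw [map_sub, map_smul, map_add, hτm, hτa 0, hτa 1, show -(0:ℤ) = 0 by norm_num]
    exact pinv1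
  have H'' : (2 : F) • (a 1 * a (-1) - η • (a 1 + a (-1))) +
      (2 * α) • (a 0 * a 1 - η • (a 0 + a 1)) +
      (η * (2 * α - β + 2) + β) • a (-1) = 0 := by
    have h := congrArg τ₀ H'
    simp only [map_add, map_smul, map_zero] at h
    rw [eτq, eτp1, hτa 1] at h
    exact h
  have hkey : (η * (2 * α - β + 2) + β) • a 1 = (η * (2 * α - β + 2) + β) • a (-1) :=
    add_left_cancel (H'.trans H''.symm)
  -- show the coefficient vanishes
  have hc0 : η * (2 * α - β + 2) + β = 0 := by
    by_contra hc
    have h11 : a 1 = a (-1) := by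
      have := congrArg (fun z => (η * (2 * α - β + 2) + β)⁻¹ • z) hkey
      simpa [smul_smul, inv_mul_cancel₀ hc] using this
    -- a is then 2-periodic, so the axial dimension is at most 2
    have sfwd : ∀ j : ℤ, θ (τ₀ (a j)) = a (j + 1) := by
      intro j; rw [hτa, hθa]; congr 1; ring
    have sbwd : ∀ j : ℤ, τ₀ (θ (a j)) = a (j - 1) := by
      intro j; rw [hθa, hτa]; congr 1; ring
    have per : ∀ i : ℤ, a (i + 2) = a i := by
      intro i
      induction i using Int.induction_on with
      | zero =>
        have h := congrArg θ h11
        rw [hθa 1, hθa (-1)] at h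
        norm_num at h
        exact h.symm
      | succ i ih =>
        have h := congrArg (fun z => θ (τ₀ z)) ih
        rw [sfwd (i + 2), sfwd i] at h
        rw [show (i : ℤ) + 1 + 2 = i + 2 + 1 by ring]
        exact h
      | pred i ih =>
        have h := congrArg (fun z => τ₀ (θ z)) ih
        rw [sbwd (-i + 2), sbwd (-i)] at h
        rw [show (-(i:ℤ) - 1 + 2) = -i + 2 - 1 by ring]
        exact h
    have per2 : ∀ k : ℤ, ∀ r : ℤ, a (2 * k + r) = a r := by
      intro k
      induction k using Int.induction_on with
      | zero => intro r; norm_num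
      | succ k ih =>
        intro r
        rw [show 2 * ((k : ℤ) + 1) + r = (2 * k + r) + 2 by ring, per, ih]
      | pred k ih =>
        intro r
        rw [show 2 * (-(k : ℤ) - 1) + r = 2 * (-k) + (r - 2) by ring, ih,
          ← per (r - 2)]
        congr 1; ring
    have amod : ∀ i : ℤ, a i = a 0 ∨ a i = a 1 := by
      intro i
      have h := per2 (i / 2) (i % 2)
      rw [Int.mul_ediv_add_emod] at h
      rcases Int.emod_two_eq i with h2 | h2 <;> rw [h2] at h
      · exact Or.inl h
      · exact Or.inr h
    have hsp : Submodule.span F (Set.range a) ≤ Submodule.span F ({a 0, a 1} : Set M) := by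
      rw [Submodule.span_le]
      rintro _ ⟨i, rfl⟩
      rcases amod i with h | h <;> rw [h] <;>
        exact Submodule.subset_span (by simp)
    have hr1 : Module.rank F ↥(Submodule.span F (Set.range a)) ≤
        Module.rank F ↥(Submodule.span F ({a 0, a 1} : Set M)) :=
      Submodule.rank_mono hsp
    have hr2 : Module.rank F ↥(Submodule.span F ({a 0, a 1} : Set M)) ≤ 2 := by
      refine le_trans (rank_span_le ({a 0, a 1} : Set M)) ?_
      refine le_trans (Cardinal.mk_insert_le) ?_
      rw [Cardinal.mk_singleton]
      norm_num
    rw [hD] at hr1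
    have : (4 : Cardinal) ≤ 2 := le_trans hr1 hr2
    norm_num at this
  refine ⟨hc0, ?_⟩
  -- conclude p₂ = -α p₁
  rw [hc0, zero_smul, add_zero] at conc1
  have h2 : (2 : F) • ((a 0 * a 2 - η • (a 0 + a 2)) + α • (a 0 * a 1 - η • (a 0 + a 1))) = 0 := by
    rw [← conc1]; module
  have h3 : (a 0 * a 2 - η • (a 0 + a 2)) + α • (a 0 * a 1 - η • (a 0 + a 1)) = 0 :=
    (smul_eq_zero.mp h2).resolve_left hchar
  have h4 := eq_neg_of_add_eq_zero_left h3
  rwa [← neg_smul] at h4
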